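/- Per-iteration bound for Gaussian noise under L₂-bounded updates (core of Theorem 2): Let d ∈ ℕ, d ≥ 1, σ > 0, R > 0, and let f(w) = (2πσ²)^{−d/2} exp(−‖w‖₂²/(2σ²)) be the density of 𝒩(0, σ²I_d). Then ∫_{ℝ^d} sup_{x: ‖x‖₂ ≤ R} f(w − x) dw = V₂(d,R)/(2πσ²)^{d/2} + (1/Γ(d/2)) ∑_{i=0}^{d−1} binom(d−1, i) Γ((i+1)/2) (R/(σ√2))^{d−1−i}, where V₂(d,R) = π^{d/2} R^d / Γ(d/2 + 1) is the volume of the Euclidean ball of radius R in ℝ^d. -/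

import Mathlib

open MeasureTheory
open scoped BigOperators
open Set Real

lemma gauss_sup {d : ℕ} (σ R : ℝ) (hσ : 0 < σ) (hR : 0 < R)
    (w : EuclideanSpace ℝ (Fin d)) :
    (⨆ x ∈ Metric.closedBall (0 : EuclideanSpace ℝ (Fin d)) R,
      (2 * Real.pi * σ ^ 2) ^ (-(d : ℝ) / 2) * Real.exp (-‖w - x‖ ^ 2 / (2 * σ ^ 2)))
    = (2 * Real.pi * σ ^ 2) ^ (-(d : ℝ) / 2) *
        Real.exp (-(max (‖w‖ - R) 0) ^ 2 / (2 * σ ^ 2)) := by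
  set c : ℝ := (2 * Real.pi * σ ^ 2) ^ (-(d : ℝ) / 2) with hc
  have hcpos : 0 < c := Real.rpow_pos_of_pos (by positivity) _
  set m : ℝ := max (‖w‖ - R) 0 with hm
  have hm0 : 0 ≤ m := le_max_right _ _
  have key : ∀ x : EuclideanSpace ℝ (Fin d),
      x ∈ Metric.closedBall (0 : EuclideanSpace ℝ (Fin d)) R →
      c * Real.exp (-‖w - x‖ ^ 2 / (2 * σ ^ 2)) ≤ c * Real.exp (-m ^ 2 / (2 * σ ^ 2)) := by
    intro x hx
    have hxR : ‖x‖ ≤ R := by simpa [Metric.mem_closedBall] using hx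
    have h1 : m ≤ ‖w - x‖ := by
      apply max_le _ (norm_nonneg _)
      have := norm_sub_norm_le w x
      linarith
    have h2 : m ^ 2 ≤ ‖w - x‖ ^ 2 := by nlinarith [norm_nonneg (w - x)]
    gcongr
  apply le_antisymm
  · apply Real.iSup_le _ (by positivity)
    intro x
    apply Real.iSup_le _ (by positivity)
    intro hx
    exact key x hx
  · have hbdd : BddAbove (Set.range fun x : EuclideanSpace ℝ (Fin d) =>
        ⨆ _ : x ∈ Metric.closedBall (0 : EuclideanSpace ℝ (Fin d)) R,
          c * Real.exp (-‖w - x‖ ^ 2 / (2 * σ ^ 2))) := by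
      refine ⟨c * Real.exp (-m ^ 2 / (2 * σ ^ 2)), ?_⟩
      rintro _ ⟨x, rfl⟩
      exact Real.iSup_le (fun hx => key x hx) (by positivity)
    by_cases hw : ‖w‖ ≤ R
    · refine le_ciSup_of_le hbdd w ?_
      have hmem : w ∈ Metric.closedBall (0 : EuclideanSpace ℝ (Fin d)) R := by
        simpa [Metric.mem_closedBall] using hw
      rw [ciSup_pos hmem]
      have : ‖w - w‖ = m := by
        rw [sub_self, norm_zero, hm, max_eq_right (by linarith)]
      rw [this]
    · push_neg at hw
      set x₀ : EuclideanSpace ℝ (Fin d) := (R / ‖w‖) • w with hx₀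
      have hwpos : 0 < ‖w‖ := lt_trans hR hw
      have hwne : ‖w‖ ≠ 0 := hwpos.ne'
      have hnx₀ : ‖x₀‖ = R := by
        rw [hx₀, norm_smul, Real.norm_eq_abs, abs_of_pos (by positivity), div_mul_cancel₀ _ hwne]
      refine le_ciSup_of_le hbdd x₀ ?_
      have hmem : x₀ ∈ Metric.closedBall (0 : EuclideanSpace ℝ (Fin d)) R := by
        simp [Metric.mem_closedBall, hnx₀]
      rw [ciSup_pos hmem]
      have hsub : w - x₀ = (1 - R / ‖w‖) • w := by
        rw [hx₀, sub_smul, one_smul]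
      have : ‖w - x₀‖ = m := by
        rw [hsub, norm_smul, Real.norm_eq_abs,
          abs_of_nonneg (by rw [sub_nonneg]; exact div_le_one_of_le₀ hw.le (norm_nonneg w)),
          sub_mul, one_mul, div_mul_cancel₀ _ hwne, hm, max_eq_left (by linarith)]
      rw [this]

-- value of the Gaussian moment on Ioi 0
lemma gauss_moment (σ : ℝ) (hσ : 0 < σ) (i : ℕ) :
    ∫ x in Ioi (0:ℝ), x ^ i * Real.exp (-x ^ 2 / (2 * σ ^ 2))
      = (2 * σ ^ 2) ^ (((i : ℝ) + 1) / 2) * (1 / 2) * Real.Gamma (((i : ℝ) + 1) / 2) := by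
  have hb : (0:ℝ) < 1 / (2 * σ ^ 2) := by positivity
  have h := integral_rpow_mul_exp_neg_mul_rpow (p := 2) (q := (i : ℝ)) (b := 1 / (2 * σ ^ 2))
    two_pos (lt_of_lt_of_le neg_one_lt_zero (Nat.cast_nonneg i)) hb
  rw [setIntegral_congr_fun measurableSet_Ioi
    (fun x hx => ?_ : EqOn (fun x => x ^ i * Real.exp (-x ^ 2 / (2 * σ ^ 2)))
      (fun x => x ^ ((i:ℝ)) * Real.exp (-(1 / (2 * σ ^ 2)) * x ^ (2:ℝ))) (Ioi 0)), h]
  · rw [one_div, Real.inv_rpow (le_of_lt (by positivity)), ← Real.rpow_neg (le_of_lt (by positivity)),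
      neg_div, neg_neg]
  · have hx0 : (0:ℝ) < x := hx
    simp only
    rw [Real.rpow_natCast, Real.rpow_two]
    congr 1
    rw [neg_div, neg_mul, one_div, inv_mul_eq_div]

lemma gauss_moment_integrable (σ : ℝ) (hσ : 0 < σ) (i : ℕ) :
    IntegrableOn (fun x => x ^ i * Real.exp (-x ^ 2 / (2 * σ ^ 2))) (Ioi (0:ℝ)) := by
  have hb : (0:ℝ) < 1 / (2 * σ ^ 2) := by positivity
  have := integrableOn_rpow_mul_exp_neg_mul_sq hb (s := (i:ℝ)) (lt_of_lt_of_le neg_one_lt_zero (Nat.cast_nonneg i))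
  refine this.congr_fun (fun x hx => ?_) measurableSet_Ioi
  have hx0 : (0:ℝ) < x := hx
  simp only
  rw [Real.rpow_natCast]
  congr 1
  rw [neg_div, neg_mul, one_div, inv_mul_eq_div]

lemma radial_integral (σ R c : ℝ) (hσ : 0 < σ) (hR : 0 < R) (e : ℕ) :
    ∫ y in Ioi (0:ℝ), y ^ e * (c * Real.exp (-(max (y - R) 0) ^ 2 / (2 * σ ^ 2)))
    = c * R ^ (e + 1) / (e + 1)
      + ∑ i ∈ Finset.range (e + 1), (e.choose i : ℝ) * R ^ (e - i) * c *
          ((2 * σ ^ 2) ^ (((i : ℝ) + 1) / 2) * (1 / 2) * Real.Gamma (((i : ℝ) + 1) / 2)) := by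
  have hcont : Continuous fun y : ℝ => y ^ e * (c * Real.exp (-(max (y - R) 0) ^ 2 / (2 * σ ^ 2))) := by
    fun_prop
  -- integrand on Ioi R, translated
  set G : ℝ → ℝ := fun y => y ^ e * (c * Real.exp (-(y - R) ^ 2 / (2 * σ ^ 2))) with hG
  -- translated integrand as a finite sum
  have hexp : ∀ x : ℝ, G (x + R) = ∑ i ∈ Finset.range (e + 1),
      (e.choose i : ℝ) * R ^ (e - i) * (c * (x ^ i * Real.exp (-x ^ 2 / (2 * σ ^ 2)))) := by
    intro x
    rw [hG]
    simp only [add_sub_cancel_right]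
    rw [add_pow, Finset.sum_mul]
    refine Finset.sum_congr rfl fun i hi => ?_
    ring
  have hint_i : ∀ i ∈ Finset.range (e + 1), IntegrableOn
      (fun x => (e.choose i : ℝ) * R ^ (e - i) * (c * (x ^ i * Real.exp (-x ^ 2 / (2 * σ ^ 2)))))
      (Ioi (0:ℝ)) := by
    intro i _
    exact (((gauss_moment_integrable σ hσ i).const_mul c).const_mul _)
  have hsum_int : IntegrableOn (fun x => G (x + R)) (Ioi (0:ℝ)) := by
    exact IntegrableOn.congr_fun (integrable_finset_sum _ hint_i) (fun x hx => (hexp x).symm) measurableSet_Ioi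
  -- translation for integrability and value
  have hmp : MeasurePreserving (fun x : ℝ => x + R) volume volume :=
    measurePreserving_add_right volume R
  have hemb : MeasurableEmbedding (fun x : ℝ => x + R) :=
    (MeasurableEquiv.addRight R).measurableEmbedding
  have hpre : (fun x : ℝ => x + R) ⁻¹' (Ioi R) = Ioi 0 := by
    ext x; simp [lt_add_iff_pos_left]
  have hG_int : IntegrableOn G (Ioi R) := by
    refine (hmp.integrableOn_comp_preimage hemb).mp ?_
    rw [hpre]
    exact hsum_int
  have htrans : ∫ y in Ioi R, G y = ∫ x in Ioi (0:ℝ), G (x + R) := by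
    rw [← hmp.setIntegral_preimage_emb hemb G (Ioi R), hpre]
  -- the split
  have hsplit : Ioi (0:ℝ) = Ioc 0 R ∪ Ioi R := (Ioc_union_Ioi_eq_Ioi hR.le).symm
  rw [hsplit, setIntegral_union (Ioc_disjoint_Ioi le_rfl) measurableSet_Ioi
      (hcont.integrableOn_Ioc) ?_]
  · congr 1
    · -- Ioc piece
      rw [setIntegral_congr_fun measurableSet_Ioc
        (fun y hy => ?_ : EqOn (fun y => y ^ e * (c * Real.exp (-(max (y - R) 0) ^ 2 / (2 * σ ^ 2))))
          (fun y => y ^ e * c) (Ioc 0 R))]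
      · rw [← intervalIntegral.integral_of_le hR.le]
        rw [intervalIntegral.integral_mul_const, integral_pow]
        rw [zero_pow (by omega), sub_zero]
        ring
      · have : max (y - R) 0 = 0 := max_eq_right (by simp at hy; linarith [hy.2])
        simp only [this]
        norm_num
    · -- Ioi piece
      rw [setIntegral_congr_fun measurableSet_Ioi
        (fun y hy => ?_ : EqOn (fun y => y ^ e * (c * Real.exp (-(max (y - R) 0) ^ 2 / (2 * σ ^ 2)))) G (Ioi R))]
      · rw [htrans, setIntegral_congr_fun measurableSet_Ioi (fun x hx => hexp x),
          integral_finset_sum _ hint_i]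
        refine Finset.sum_congr rfl fun i hi => ?_
        rw [integral_const_mul, integral_const_mul, gauss_moment σ hσ i]
        ring
      · have : max (y - R) 0 = y - R := max_eq_left (by simp at hy; linarith)
        rw [hG]
        simp only [this]
  · refine hG_int.congr_fun (fun y hy => ?_) measurableSet_Ioi
    have : max (y - R) 0 = y - R := max_eq_left (by simp at hy; linarith)
    rw [hG]
    simp only [this]

/-- Per-iteration bound for Gaussian noise under `L₂`-bounded updates (core of Theorem 2):
`∫_{ℝ^d} sup_{‖x‖₂ ≤ R} f(w-x) dw = V₂(d,R)/(2πσ²)^{d/2}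
  + (1/Γ(d/2)) ∑_{i=0}^{d-1} C(d-1,i) Γ((i+1)/2) (R/(σ√2))^{d-1-i}`,
where `f` is the density of `𝒩(0, σ²I_d)` and `V₂(d,R) = π^{d/2} R^d / Γ(d/2+1)`. -/
theorem gaussian_sliding_sup_integral
    (d : ℕ) (hd : 1 ≤ d) (σ R : ℝ) (hσ : 0 < σ) (hR : 0 < R)
    (f : EuclideanSpace ℝ (Fin d) → ℝ)
    (hf : ∀ w, f w = (2 * Real.pi * σ ^ 2) ^ (-(d : ℝ) / 2) *
        Real.exp (-‖w‖ ^ 2 / (2 * σ ^ 2))) :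
    (∫ w, ⨆ x ∈ Metric.closedBall (0 : EuclideanSpace ℝ (Fin d)) R, f (w - x))
    = Real.pi ^ ((d : ℝ) / 2) * R ^ d / Real.Gamma ((d : ℝ) / 2 + 1) /
        (2 * Real.pi * σ ^ 2) ^ ((d : ℝ) / 2)
      + (1 / Real.Gamma ((d : ℝ) / 2)) *
          ∑ i ∈ Finset.range d,
            ((d - 1).choose i : ℝ) * Real.Gamma (((i : ℝ) + 1) / 2) *
              (R / (σ * Real.sqrt 2)) ^ (d - 1 - i) := by
  haveI : Nonempty (Fin d) := ⟨⟨0, hd⟩⟩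
  set c : ℝ := (2 * Real.pi * σ ^ 2) ^ (-(d : ℝ) / 2) with hc
  set G : ℝ → ℝ := fun r => c * Real.exp (-(max (r - R) 0) ^ 2 / (2 * σ ^ 2)) with hGdef
  have h1 : (∫ w, ⨆ x ∈ Metric.closedBall (0 : EuclideanSpace ℝ (Fin d)) R, f (w - x))
      = ∫ w : EuclideanSpace ℝ (Fin d), G ‖w‖ := by
    congr 1
    funext w
    simp_rw [hf]
    exact gauss_sup σ R hσ hR w
  rw [h1, integral_fun_norm_addHaar volume G, finrank_euclideanSpace_fin,
    measureReal_def, EuclideanSpace.volume_ball]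
  simp only [Fintype.card_fin, ENNReal.ofReal_one, one_pow, one_mul,
    ENNReal.toReal_ofReal (by positivity : (0:ℝ) ≤ √π ^ d / Real.Gamma ((d:ℝ) / 2 + 1)),
    nsmul_eq_mul, smul_eq_mul]
  have hrad := radial_integral σ R c hσ hR (d - 1)
  rw [Nat.sub_add_cancel hd] at hrad
  rw [hrad]
  -- now pure algebra
  have hd1 : ((d - 1 : ℕ) : ℝ) + 1 = (d : ℝ) := by
    exact_mod_cast congrArg Nat.cast (Nat.sub_add_cancel hd)
  have hdne : (d : ℝ) ≠ 0 := by positivity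
  have hP : (0:ℝ) < 2 * σ ^ 2 := by positivity
  have hπd : (√π : ℝ) ^ d = π ^ ((d : ℝ) / 2) := by
    rw [Real.sqrt_eq_rpow, ← Real.rpow_natCast (π ^ ((1:ℝ)/2)) d, ← Real.rpow_mul Real.pi_pos.le]
    congr 1
    ring
  have hΓ1pos : 0 < Real.Gamma ((d : ℝ) / 2 + 1) := Real.Gamma_pos_of_pos (by positivity)
  have hΓdpos : 0 < Real.Gamma ((d : ℝ) / 2) := Real.Gamma_pos_of_pos (by positivity)
  have hΓ2 : Real.Gamma ((d : ℝ) / 2 + 1) = ((d : ℝ) / 2) * Real.Gamma ((d : ℝ) / 2) :=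
    Real.Gamma_add_one (by positivity)
  rw [hd1]
  rw [show ∀ a b : ℝ, (d:ℝ) * (√π ^ d / Real.Gamma ((d:ℝ)/2+1) * (a + b))
      = (d:ℝ) * (√π ^ d / Real.Gamma ((d:ℝ)/2+1) * a)
        + (d:ℝ) * (√π ^ d / Real.Gamma ((d:ℝ)/2+1) * b) from fun a b => by ring]
  congr 1
  · -- first piece
    have hcval : c = ((2 * π * σ ^ 2) ^ ((d : ℝ) / 2))⁻¹ := by
      rw [hc, neg_div, Real.rpow_neg (by positivity)]
    rw [hcval, hπd]
    have hQ : (0:ℝ) < (2 * π * σ ^ 2) ^ ((d : ℝ) / 2) := Real.rpow_pos_of_pos (by positivity) _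
    field_simp
  · -- sum piece
    simp only [Finset.mul_sum]
    refine Finset.sum_congr rfl fun i hi => ?_
    have hi' : i < d := Finset.mem_range.mp hi
    have hn : ((d - 1 - i : ℕ) : ℝ) = (d : ℝ) - 1 - (i : ℝ) := by
      have h1 : i ≤ d - 1 := by omega
      rw [Nat.cast_sub h1, Nat.cast_sub hd]
      norm_num
    set A : ℝ := (2 * σ ^ 2) ^ (((i : ℝ) + 1) / 2) with hA
    set B : ℝ := (2 * σ ^ 2) ^ (((d - 1 - i : ℕ) : ℝ) / 2) with hB
    have hApos : 0 < A := Real.rpow_pos_of_pos hP _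
    have hBpos : 0 < B := Real.rpow_pos_of_pos hP _
    have hπdpos : (0:ℝ) < √π ^ d := by positivity
    have hσ2 : σ * √2 = (2 * σ ^ 2) ^ ((1:ℝ)/2) := by
      rw [← Real.sqrt_eq_rpow, show (2:ℝ) * σ ^ 2 = σ ^ 2 * 2 by ring,
        Real.sqrt_mul (sq_nonneg σ), Real.sqrt_sq hσ.le]
    have hsplit : (R / (σ * √2)) ^ (d - 1 - i) = R ^ (d - 1 - i) * B⁻¹ := by
      rw [div_pow, div_eq_mul_inv]
      congr 2
      rw [hσ2, hB, ← Real.rpow_natCast ((2 * σ ^ 2) ^ ((1:ℝ)/2)) (d - 1 - i),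
        ← Real.rpow_mul hP.le]
      congr 1
      ring
    have hGrand : √π ^ d * c * (A * B) = 1 := by
      rw [hπd, hc, hA, hB, hn, show (2 * π * σ ^ 2) = π * (2 * σ ^ 2) by ring,
        Real.mul_rpow Real.pi_pos.le hP.le]
      rw [show π ^ ((d:ℝ)/2) * (π ^ (-(d:ℝ)/2) * (2 * σ ^ 2) ^ (-(d:ℝ)/2)) *
          ((2 * σ ^ 2) ^ (((i:ℝ)+1)/2) * (2 * σ ^ 2) ^ (((d:ℝ)-1-(i:ℝ))/2))
        = (π ^ ((d:ℝ)/2) * π ^ (-(d:ℝ)/2)) *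
          (((2 * σ ^ 2) ^ (-(d:ℝ)/2) * (2 * σ ^ 2) ^ (((i:ℝ)+1)/2)) *
            (2 * σ ^ 2) ^ (((d:ℝ)-1-(i:ℝ))/2)) by ring]
      rw [← Real.rpow_add Real.pi_pos, ← Real.rpow_add hP, ← Real.rpow_add hP]
      rw [show (d:ℝ)/2 + -(d:ℝ)/2 = 0 by ring,
        show -(d:ℝ)/2 + ((i:ℝ)+1)/2 + ((d:ℝ)-1-(i:ℝ))/2 = 0 by ring,
        Real.rpow_zero, Real.rpow_zero, mul_one]
    have hcval : c = (√π ^ d * A * B)⁻¹ :=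
      eq_inv_of_mul_eq_one_left (by linear_combination hGrand)
    rw [hsplit, hΓ2, hcval]
    field_simp
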